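/- Let $z_1, z_2, z_3, z_4, z_5$ be nonzero complex numbers with $|z_1| \geq |z_2| \geq |z_3| \geq |z_4| \geq |z_5|$ and $z_i^{-1} = z_{6-i}$ for $1 \leq i \leq 5$. Then $\sum_{i=1}^5 |z_i| \leq 2\left|\sum_{i=1}^5 z_i^2\right|^{1/2} + 2\left|\sum_{i=1}^5 z_i\right| + 15$. -/

import Mathlib

lemma key_two (u v : ℂ) :
    ‖u‖ + ‖v‖ ≤
      2 * ‖u + v‖ + 2 * Real.sqrt (‖u ^ 2 + v ^ 2‖) := by
  set a := ‖u‖ with ha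
  set b := ‖v‖ with hb
  set L := ‖u + v‖ with hL
  set W := Real.sqrt (‖u ^ 2 + v ^ 2‖) with hW
  have ha0 : 0 ≤ a := norm_nonneg u
  have hb0 : 0 ≤ b := norm_nonneg v
  have hL0 : 0 ≤ L := norm_nonneg _
  have hW0 : 0 ≤ W := Real.sqrt_nonneg _
  have hW2 : W ^ 2 = ‖u ^ 2 + v ^ 2‖ := Real.sq_sqrt (norm_nonneg _)
  have h1 : 2 * a * b ≤ L ^ 2 + W ^ 2 := by
    have e : (2 : ℂ) * u * v = (u + v) ^ 2 - (u ^ 2 + v ^ 2) := by ring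
    have e2 : ‖(2 : ℂ) * u * v‖ = 2 * a * b := by
      simp [norm_mul, ha, hb]
    have e3 : ‖(u + v) ^ 2 - (u ^ 2 + v ^ 2)‖ ≤
        ‖(u + v) ^ 2‖ + ‖u ^ 2 + v ^ 2‖ :=
      norm_sub_le _ _
    rw [← e2, e]
    calc ‖(u + v) ^ 2 - (u ^ 2 + v ^ 2)‖ ≤
        ‖(u + v) ^ 2‖ + ‖u ^ 2 + v ^ 2‖ := e3
      _ = L ^ 2 + W ^ 2 := by rw [norm_pow, hW2]
  have h2 : a ≤ L + b := by
    calc a = ‖(u + v) - v‖ := by ring_nf; exact ha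
      _ ≤ L + b := norm_sub_le _ _
  have h3 : b ≤ L + a := by
    calc b = ‖(u + v) - u‖ := by ring_nf; exact hb
      _ ≤ L + a := norm_sub_le _ _
  nlinarith [sq_nonneg (a - b), sq_nonneg (L - W), sq_nonneg (a + b - 2 * L - 2 * W),
    mul_nonneg hL0 hW0, mul_nonneg ha0 hb0]

theorem stmt_2 (z1 z2 z3 z4 z5 : ℂ)
    (h1 : z1 ≠ 0) (h2 : z2 ≠ 0) (h3 : z3 ≠ 0) (h4 : z4 ≠ 0) (h5 : z5 ≠ 0)
    (ho1 : ‖z2‖ ≤ ‖z1‖)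
    (ho2 : ‖z3‖ ≤ ‖z2‖)
    (ho3 : ‖z4‖ ≤ ‖z3‖)
    (ho4 : ‖z5‖ ≤ ‖z4‖)
    (hi1 : z1⁻¹ = z5) (hi2 : z2⁻¹ = z4) (hi3 : z3⁻¹ = z3) :
    ‖z1‖ + ‖z2‖ + ‖z3‖ + ‖z4‖ + ‖z5‖ ≤
      2 * Real.sqrt (‖z1 ^ 2 + z2 ^ 2 + z3 ^ 2 + z4 ^ 2 + z5 ^ 2‖) +
        2 * ‖z1 + z2 + z3 + z4 + z5‖ + 15 := by
  have h33 : z3 * z3 = 1 := by nth_rewrite 1 [← hi3]; exact inv_mul_cancel₀ h3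
  have habs3 : ‖z3‖ = 1 := by
    have e : ‖z3‖ * ‖z3‖ = 1 := by rw [← norm_mul, h33, norm_one]
    nlinarith [norm_nonneg z3]
  have hz3 : ‖z3‖ ≤ 1 := le_of_eq habs3
  have hz4 : ‖z4‖ ≤ 1 := ho3.trans hz3
  have hz5 : ‖z5‖ ≤ 1 := ho4.trans hz4
  set T := ‖z1 + z2 + z3 + z4 + z5‖ with hT
  set B := ‖z1 ^ 2 + z2 ^ 2 + z3 ^ 2 + z4 ^ 2 + z5 ^ 2‖ with hB
  have hB0 : 0 ≤ B := norm_nonneg _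
  -- bound |z1 + z2|
  have h12 : ‖z1 + z2‖ ≤ T + 3 := by
    have e : z1 + z2 = (z1 + z2 + z3 + z4 + z5) - z3 - z4 - z5 := by ring
    calc ‖z1 + z2‖
        = ‖(z1 + z2 + z3 + z4 + z5) - z3 - z4 - z5‖ := by rw [← e]
      _ ≤ ‖(z1 + z2 + z3 + z4 + z5) - z3 - z4‖ + ‖z5‖ :=
          norm_sub_le _ _
      _ ≤ (‖(z1 + z2 + z3 + z4 + z5) - z3‖ + ‖z4‖) + ‖z5‖ := by
          gcongr; exact norm_sub_le _ _
      _ ≤ ((T + ‖z3‖) + ‖z4‖) + ‖z5‖ := by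
          gcongr; exact norm_sub_le _ _
      _ ≤ T + 3 := by linarith
  -- bound |z1^2 + z2^2|
  have hsq3 : ‖z3 ^ 2‖ ≤ 1 := by rw [norm_pow, habs3]; norm_num
  have hsq4 : ‖z4 ^ 2‖ ≤ 1 := by
    rw [norm_pow]; nlinarith [norm_nonneg z4]
  have hsq5 : ‖z5 ^ 2‖ ≤ 1 := by
    rw [norm_pow]; nlinarith [norm_nonneg z5]
  have h12sq : ‖z1 ^ 2 + z2 ^ 2‖ ≤ B + 3 := by
    have e : z1 ^ 2 + z2 ^ 2 =
        (z1 ^ 2 + z2 ^ 2 + z3 ^ 2 + z4 ^ 2 + z5 ^ 2) - z3 ^ 2 - z4 ^ 2 - z5 ^ 2 := by ring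
    calc ‖z1 ^ 2 + z2 ^ 2‖
        = ‖(z1 ^ 2 + z2 ^ 2 + z3 ^ 2 + z4 ^ 2 + z5 ^ 2) - z3 ^ 2 - z4 ^ 2 - z5 ^ 2‖ := by
          rw [← e]
      _ ≤ ‖(z1 ^ 2 + z2 ^ 2 + z3 ^ 2 + z4 ^ 2 + z5 ^ 2) - z3 ^ 2 - z4 ^ 2‖ +
            ‖z5 ^ 2‖ := norm_sub_le _ _
      _ ≤ (‖(z1 ^ 2 + z2 ^ 2 + z3 ^ 2 + z4 ^ 2 + z5 ^ 2) - z3 ^ 2‖ +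
            ‖z4 ^ 2‖) + ‖z5 ^ 2‖ := by
          gcongr; exact norm_sub_le _ _
      _ ≤ ((B + ‖z3 ^ 2‖) + ‖z4 ^ 2‖) + ‖z5 ^ 2‖ := by
          gcongr; exact norm_sub_le _ _
      _ ≤ B + 3 := by linarith
  have hkey := key_two z1 z2
  have hsqrt1 : Real.sqrt (‖z1 ^ 2 + z2 ^ 2‖) ≤ Real.sqrt (B + 3) :=
    Real.sqrt_le_sqrt h12sq
  have hsqrt2 : Real.sqrt (B + 3) ≤ Real.sqrt B + 2 := by
    have e1 : Real.sqrt (B + 3) ^ 2 = B + 3 := Real.sq_sqrt (by linarith)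
    have e2 : Real.sqrt B ^ 2 = B := Real.sq_sqrt hB0
    nlinarith [Real.sqrt_nonneg (B + 3), Real.sqrt_nonneg B]
  have hab : ‖z1‖ + ‖z2‖ ≤ 2 * (T + 3) + 2 * (Real.sqrt B + 2) := by
    calc ‖z1‖ + ‖z2‖ ≤
        2 * ‖z1 + z2‖ + 2 * Real.sqrt (‖z1 ^ 2 + z2 ^ 2‖) := hkey
      _ ≤ 2 * (T + 3) + 2 * (Real.sqrt B + 2) := by
          gcongr
          exact hsqrt1.trans hsqrt2
  linarith
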